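/- arXiv:1301.5910 — 2 statements merged into one kernel-verified Lean document; each statement's English description precedes it below -/
import Mathlib

section
/- Let r ≥ 3 and let e_1,...,e_r be complex numbers. Suppose that Φ_{e_{s(1)},...,e_{s(r)}}(x) = x as rational functions for every permutation s of {1,...,r}. Then e_1 = e_2 = ... = e_r. -/
open Matrix

/-- The 2×2 matrix of the Möbius transformation `x ↦ 1/(e - x)`. -/
noncomputable def mobA (e : ℂ) : Matrix (Fin 2) (Fin 2) ℂ := !![0, 1; -1, e]

/-- The matrix of the continued fraction Möbius transformation
`Φ_{e₁,…,e_r}(x) = 1/(e_r - 1/(e_{r-1} - ⋯ - 1/(e₁ - x)))`, for the list `[e₁, …, e_r]`. -/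
noncomputable def phiL (l : List ℂ) : Matrix (Fin 2) (Fin 2) ℂ :=
  l.foldl (fun M e => mobA e * M) 1

/-- `M` and `N` define the same Möbius transformation (equality as rational functions). -/
def MobiusEq (M N : Matrix (Fin 2) (Fin 2) ℂ) : Prop := ∃ c : ℂ, c ≠ 0 ∧ M = c • N

/-- `M` defines the identity Möbius transformation `x ↦ x`. -/
def IsMobiusId (M : Matrix (Fin 2) (Fin 2) ℂ) : Prop := MobiusEq M 1

lemma foldl_mul (l : List ℂ) (M : Matrix (Fin 2) (Fin 2) ℂ) :
    l.foldl (fun M e => mobA e * M) M = l.foldl (fun M e => mobA e * M) 1 * M := by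
  induction l generalizing M with
  | nil => simp
  | cons a l ih =>
    simp only [List.foldl_cons]
    rw [ih (mobA a * M), ih (mobA a * 1), Matrix.mul_assoc, Matrix.mul_one]

lemma phiL_cons (a : ℂ) (l : List ℂ) : phiL (a :: l) = phiL l * mobA a := by
  simp only [phiL, List.foldl_cons]
  rw [foldl_mul, Matrix.mul_one]

lemma det_mobA (a : ℂ) : (mobA a).det = 1 := by
  simp [mobA, Matrix.det_fin_two_of]

lemma det_phiL (l : List ℂ) : (phiL l).det = 1 := by
  induction l with
  | nil => simp [phiL]
  | cons a l ih => rw [phiL_cons, Matrix.det_mul, ih, det_mobA, one_mul]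

/-- Let `r ≥ 3` and `e₁,…,e_r ∈ ℂ`.  If `Φ_{e_{s(1)},…,e_{s(r)}}(x) = x` as rational
functions for every permutation `s`, then `e₁ = e₂ = ⋯ = e_r`. -/
theorem stmt_5 (r : ℕ) (hr : 3 ≤ r) (e : Fin r → ℂ)
    (h : ∀ s : Equiv.Perm (Fin r), IsMobiusId (phiL (List.ofFn fun i => e (s i)))) :
    ∀ i j, e i = e j := by
  obtain ⟨n, rfl⟩ : ∃ n, r = n + 2 := ⟨r - 2, by omega⟩
  intro i j
  rcases eq_or_ne i j with rfl | hij
  · rfl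
  -- build permutation s with s 0 = i, s 1 = j
  have h01 : (0 : Fin (n+2)) ≠ 1 := Fin.zero_ne_one
  set t : Equiv.Perm (Fin (n+2)) := Equiv.swap 0 i with ht
  have hj' : t.symm j ≠ 0 := by
    intro hz
    apply hij.symm
    have := congrArg t hz
    rw [Equiv.apply_symm_apply] at this
    rw [this, ht, Equiv.swap_apply_left]
  set u : Equiv.Perm (Fin (n+2)) := Equiv.swap 1 (t.symm j) with hu
  set s : Equiv.Perm (Fin (n+2)) := u.trans t with hs
  have hs0 : s 0 = i := by
    simp only [hs, Equiv.trans_apply, hu]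
    rw [Equiv.swap_apply_of_ne_of_ne h01 (Ne.symm hj'), ht, Equiv.swap_apply_left]
  have hs1 : s 1 = j := by
    simp only [hs, Equiv.trans_apply, hu]
    rw [Equiv.swap_apply_left, Equiv.apply_symm_apply]
  set s' : Equiv.Perm (Fin (n+2)) := (Equiv.swap 0 1).trans s with hs'
  -- the two lists
  have tail_eq : (fun k : Fin n => e (s' k.succ.succ)) = fun k : Fin n => e (s k.succ.succ) := by
    funext k
    simp only [hs', Equiv.trans_apply]
    rw [Equiv.swap_apply_of_ne_of_ne]
    · exact Fin.succ_ne_zero _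
    · intro hk
      have : (k.succ : Fin (n+1)) = 0 := by
        apply Fin.succ_injective
        exact hk
      exact Fin.succ_ne_zero _ this
  set P : Matrix (Fin 2) (Fin 2) ℂ := phiL (List.ofFn fun k : Fin n => e (s k.succ.succ)) with hP
  have hl1 : (List.ofFn fun k => e (s k)) = e (s 0) :: e (s 1) ::
      (List.ofFn fun k : Fin n => e (s k.succ.succ)) := by
    rw [List.ofFn_succ, List.ofFn_succ]
    rfl
  have hl2 : (List.ofFn fun k => e (s' k)) = e (s 1) :: e (s 0) ::
      (List.ofFn fun k : Fin n => e (s k.succ.succ)) := by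
    rw [List.ofFn_succ, List.ofFn_succ]
    have h0 : s' 0 = s 1 := by
      simp only [hs', Equiv.trans_apply, Equiv.swap_apply_left]
    have h1 : s' 1 = s 0 := by
      simp only [hs', Equiv.trans_apply, Equiv.swap_apply_right]
    rw [tail_eq, h0, show ((0 : Fin (n+1)).succ) = (1 : Fin (n+2)) from rfl, h1]
  obtain ⟨c, hc, hceq⟩ := h s
  obtain ⟨c', hc', hceq'⟩ := h s'
  rw [hl1, phiL_cons, phiL_cons, ← hP] at hceq
  rw [hl2, phiL_cons, phiL_cons, ← hP] at hceq'
  -- hceq : P * mobA (e (s 1)) * mobA (e (s 0)) = c • 1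
  -- hceq' : P * mobA (e (s 0)) * mobA (e (s 1)) = c' • 1
  set a := e (s 0)
  set b := e (s 1)
  have key : c' • (mobA b * mobA a) = c • (mobA a * mobA b) := by
    have hdet : IsUnit P.det := by rw [hP, det_phiL]; exact isUnit_one
    haveI := P.invertibleOfIsUnitDet hdet
    apply Matrix.mul_right_injective_of_invertible P
    show P * (c' • (mobA b * mobA a)) = P * (c • (mobA a * mobA b))
    rw [mul_smul_comm, mul_smul_comm, ← Matrix.mul_assoc, ← Matrix.mul_assoc,
      hceq, hceq', smul_smul, smul_smul, mul_comm]
  have h00 := congrFun (congrFun key 0) 1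
  simp only [Matrix.smul_apply, mobA, Matrix.mul_apply, Fin.sum_univ_two,
    Matrix.of_apply, Matrix.cons_val', Matrix.cons_val_zero, Matrix.cons_val_one,
    Matrix.head_cons, Matrix.head_fin_const, Matrix.vecHead, Matrix.empty_val', Matrix.cons_val_fin_one,
    smul_eq_mul] at h00
  have hcc : c' = c := by
    have h01' := congrFun (congrFun key 0) 0
    simp only [Matrix.smul_apply, mobA, Matrix.mul_apply, Fin.sum_univ_two,
      Matrix.of_apply, Matrix.cons_val', Matrix.cons_val_zero, Matrix.cons_val_one,
      Matrix.head_cons, Matrix.vecHead, Matrix.empty_val', Matrix.cons_val_fin_one,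
      smul_eq_mul] at h01'
    -- entries: c' * (-1) = c * (-1)
    linear_combination -h01'
  have hab : a = b := by
    rw [hcc] at h00
    have : c * a = c * b := by linear_combination h00
    exact mul_left_cancel₀ hc this
  rw [← hs0, ← hs1]
  exact hab
end

section
/- Let e_1,...,e_r be integers with Φ_{e_{s(1)},...,e_{s(r)}}(x) = x for all permutations s, and suppose e := e_1 = ... = e_r satisfies e ∉ {-1,0,1}. Then with b_k defined by the recursion b_k = z_{k-1} b_{k-1} - b_{k-2}, b_1 = 1, b_2 = z_1, there exists no index 2 ≤ k ≤ r with b_k(e,...,e) = 0 and b_{k-1}(e,...,e) ≠ 0; in particular b_k(e,...,e) ≠ 0 for all 1 ≤ k ≤ r. (This is the divisibility step: if e b_{k-1}(e,...,e) = b_{k-2}(e,...,e), then e divides b_{k-2}(0,...,0) ∈ {-1,0,1}, forcing e ∈ {-1,0,1}.) -/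
open Matrix

def bseq (e : ℤ) : ℕ → ℤ
  | 0 => 0
  | 1 => 1
  | (n+2) => e * bseq e (n+1) - bseq e n

lemma phiL_succ (e : ℂ) (k : ℕ) :
    phiL (List.replicate (k+1) e) = mobA e * phiL (List.replicate k e) := by
  rw [List.replicate_succ']
  simp [phiL, List.foldl_append]

lemma phiL_eq (e : ℤ) (k : ℕ) :
    phiL (List.replicate k (e : ℂ)) =
      !![((bseq e (k+1) : ℤ) : ℂ) - e * bseq e k, (bseq e k : ℤ);
         -((bseq e k : ℤ) : ℂ), ((bseq e (k+1) : ℤ) : ℂ)] := by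
  induction k with
  | zero =>
      simp [phiL, bseq]
      ext i j; fin_cases i <;> fin_cases j <;> simp [Matrix.one_apply]
  | succ k ih =>
      rw [phiL_succ, ih, mobA, bseq]
      ext i j; fin_cases i <;> fin_cases j <;>
        simp [Matrix.mul_apply, Fin.sum_univ_two] <;> push_cast <;> ring

lemma bseq_grow (e : ℤ) (he : 2 ≤ |e|) : ∀ k, |bseq e k| + 1 ≤ |bseq e (k+1)| := by
  intro k
  induction k using Nat.twoStepInduction with
  | zero => simp [bseq]
  | one =>
      show |bseq e 1| + 1 ≤ |e * bseq e 1 - bseq e 0|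
      simp [bseq]; omega
  | more n _ ih2 =>
      show |bseq e (n+2)| + 1 ≤ |e * bseq e (n+2) - bseq e (n+1)|
      have h1 : |e * bseq e (n+2)| = |e| * |bseq e (n+2)| := abs_mul _ _
      have h2 : |e * bseq e (n+2)| - |bseq e (n+1)| ≤ |e * bseq e (n+2) - bseq e (n+1)| :=
        abs_sub_abs_le_abs_sub _ _
      nlinarith [ih2, abs_nonneg (bseq e (n+1)), abs_nonneg (bseq e (n+2))]

lemma bseq_ne (e : ℤ) (he : 2 ≤ |e|) (k : ℕ) (hk : 1 ≤ k) : bseq e k ≠ 0 := by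
  obtain ⟨m, rfl⟩ := Nat.exists_eq_add_of_le hk
  have := bseq_grow e he m
  have h0 := abs_nonneg (bseq e m)
  have : 1 ≤ |bseq e (m+1)| := by omega
  rw [Nat.add_comm]
  intro h; rw [h] at this; simp at this

/-- Let `e₁ = ⋯ = e_r = e` be integers with `Φ_{e,…,e}(x) = x` as rational functions (which,
the tuple being constant, is the hypothesis for every permutation), and suppose
`e ∉ {-1, 0, 1}`.  Then, with `b_k` the `(0,1)` entry of the matrix of `Φ_{e,…,e}` (`k` times),
there is no index `2 ≤ k ≤ r` with `b_k(e,…,e) = 0` and `b_{k-1}(e,…,e) ≠ 0`; in particular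
`b_k(e,…,e) ≠ 0` for all `1 ≤ k ≤ r`. -/
theorem stmt_13 (r : ℕ) (hr : 1 ≤ r) (e : ℤ)
    (hperm : IsMobiusId (phiL (List.replicate r (e : ℂ))))
    (he : e ∉ ({-1, 0, 1} : Set ℤ)) :
    (¬ ∃ k, 2 ≤ k ∧ k ≤ r ∧ (phiL (List.replicate k (e : ℂ))) 0 1 = 0 ∧
        (phiL (List.replicate (k - 1) (e : ℂ))) 0 1 ≠ 0) ∧
    ∀ k, 1 ≤ k → k ≤ r → (phiL (List.replicate k (e : ℂ))) 0 1 ≠ 0 := by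
  simp only [Set.mem_insert_iff, Set.mem_singleton_iff, not_or] at he
  have habs : 2 ≤ |e| := by rcases abs_cases e with ⟨h,_⟩|⟨h,_⟩ <;> omega
  have key : ∀ k, 1 ≤ k → (phiL (List.replicate k (e : ℂ))) 0 1 ≠ 0 := by
    intro k hk
    rw [phiL_eq]
    intro h
    apply bseq_ne e habs k hk
    have : ((bseq e k : ℤ) : ℂ) = 0 := by simpa using h
    exact_mod_cast this
  constructor
  · rintro ⟨k, hk2, hkr, h0, _⟩
    exact key k (by omega) h0
  · intro k hk _; exact key k hk
end
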